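/- If T is an n-quasi-m-isometry, then Δ_{m-1,n}(T, T^k x) = Δ_{m-1,n}(T, x) for every positive integer k and every x ∈ H, where Δ_{m,n}(T,x) = sum_{j=0}^m (-1)^{m-j} binom(m,j) ||T^{j+n}x||². -/
import Mathlib

open fwdDiff

variable {H : Type*} [NormedAddCommGroup H] [InnerProductSpace ℂ H] [CompleteSpace H]

/-- `Δ_{m,n}(T,x) = ∑_{k=0}^m (-1)^{m-k} C(m,k) ‖T^{k+n} x‖²`. -/
noncomputable def DeltaQ (T : H →L[ℂ] H) (m n : ℕ) (x : H) : ℝ :=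
  ∑ k ∈ Finset.range (m + 1),
    (-1 : ℝ) ^ (m - k) * (m.choose k : ℝ) * ‖(T ^ (k + n)) x‖ ^ 2

lemma DeltaQ_eq_fwdDiff (T : H →L[ℂ] H) (m n : ℕ) (x : H) :
    DeltaQ T m n x = (fwdDiff (1:ℕ))^[m] (fun j => ‖(T ^ j) x‖ ^ 2) n := by
  rw [fwdDiff_iter_eq_sum_shift, DeltaQ]
  refine Finset.sum_congr rfl fun k _ => ?_
  simp [zsmul_eq_mul, Nat.add_comm n k, mul_assoc]

lemma DeltaQ_apply_T (T : H →L[ℂ] H) (m n : ℕ) (x : H) :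
    DeltaQ T m n (T x) = DeltaQ T m (n + 1) x := by
  unfold DeltaQ
  refine Finset.sum_congr rfl fun k _ => ?_
  have : (T ^ (k + n)) (T x) = (T ^ (k + (n + 1))) x := by
    rw [show k + (n + 1) = (k + n) + 1 from rfl, pow_succ]
    rfl
  rw [this]

lemma DeltaQ_succ (T : H →L[ℂ] H) (m n : ℕ) (x : H) :
    DeltaQ T (m + 1) n x = DeltaQ T m (n + 1) x - DeltaQ T m n x := by
  rw [DeltaQ_eq_fwdDiff, DeltaQ_eq_fwdDiff, DeltaQ_eq_fwdDiff,
    Function.iterate_succ_apply']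
  rfl

theorem DeltaQ_invariant_of_nQuasiMIsometry (T : H →L[ℂ] H) (m n : ℕ)
    (hm : 1 ≤ m) (hn : 1 ≤ n) (hT : ∀ x : H, DeltaQ T m n x = 0) :
    ∀ (k : ℕ), 1 ≤ k → ∀ x : H, DeltaQ T (m - 1) n ((T ^ k) x) = DeltaQ T (m - 1) n x := by
  obtain ⟨m', rfl⟩ : ∃ m', m = m' + 1 := ⟨m - 1, (Nat.succ_pred_eq_of_pos hm).symm⟩
  simp only [Nat.add_sub_cancel]
  have key : ∀ (k : ℕ) (x : H), DeltaQ T m' n ((T ^ k) x) = DeltaQ T m' n x := by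
    intro k
    induction k with
    | zero => intro x; simp
    | succ k ih =>
      intro x
      have h1 : (T ^ (k + 1)) x = (T ^ k) (T x) := by rw [pow_succ]; rfl
      rw [h1, ih (T x), DeltaQ_apply_T]
      have := DeltaQ_succ T m' n x
      rw [hT x] at this
      linarith
  exact fun k _ x => key k x
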